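/- Let B be an n×n symmetric positive definite real matrix, let v, r ∈ ℝⁿ, let δ > 0, and set the corrected gradient variation r̃ := r − δv. If the inner product r̃ᵀv = (r − δv)ᵀv > 0 is positive, then the matrix B⁺ := B + (r̃ r̃ᵀ)/(vᵀ r̃) − (B v vᵀ B)/(vᵀ B v) + δ I satisfies B⁺ ⪰ δ I (i.e., all eigenvalues of B⁺ are at least δ) and satisfies the secant condition B⁺ v = r. -/

import Mathlib

open Matrix

lemma aux_mulVec {n : ℕ} (a b x : Fin n → ℝ) :
    (vecMulVec a b) *ᵥ x = (b ⬝ᵥ x) • a := by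
  ext i
  simp [vecMulVec_apply, mulVec, dotProduct, Finset.sum_mul, Finset.mul_sum, mul_comm,
    mul_left_comm]

lemma aux_transpose {n : ℕ} (a b : Fin n → ℝ) :
    (vecMulVec a b)ᵀ = vecMulVec b a := by
  ext i j; simp [vecMulVec_apply, mul_comm]

/-- Proposition 1 of the paper (regularized BFGS update): if `B ≻ 0` is symmetric,
`δ > 0`, and the corrected gradient variation `r̃ = r - δ v` satisfies `r̃ᵀ v > 0`,
then `B⁺ = B + r̃ r̃ᵀ/(vᵀ r̃) - B v vᵀ B/(vᵀ B v) + δ I` satisfies `B⁺ ⪰ δ I` and the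
secant condition `B⁺ v = r`. -/
theorem stmt_0 {n : ℕ} (B : Matrix (Fin n) (Fin n) ℝ) (hB : B.PosDef)
    (v r : Fin n → ℝ) (δ : ℝ) (hδ : 0 < δ)
    (rt : Fin n → ℝ) (hrt : rt = r - δ • v)
    (hpos : rt ⬝ᵥ v > 0)
    (Bplus : Matrix (Fin n) (Fin n) ℝ)
    (hBplus : Bplus = B + (v ⬝ᵥ rt)⁻¹ • vecMulVec rt rt
        - (v ⬝ᵥ B.mulVec v)⁻¹ • vecMulVec (B.mulVec v) (v ᵥ* B) + δ • (1 : Matrix (Fin n) (Fin n) ℝ)) :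
    (Bplus - δ • (1 : Matrix (Fin n) (Fin n) ℝ)).PosSemidef ∧ Bplus.mulVec v = r := by
  have hv : v ≠ 0 := by
    rintro rfl
    simp at hpos
  have hBsymm : Bᵀ = B := hB.1
  have hvB : v ᵥ* B = B *ᵥ v := by
    rw [← hBsymm, vecMul_transpose, hBsymm]
  have hc : 0 < v ⬝ᵥ B *ᵥ v := by have := (posDef_iff_dotProduct_mulVec.mp hB).2 hv; simpa only [star_trivial] using this
  have he : 0 < v ⬝ᵥ rt := by rwa [dotProduct_comm]
  set c := v ⬝ᵥ B *ᵥ v with hcdef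
  set e := v ⬝ᵥ rt with hedef
  have hM : Bplus - δ • (1 : Matrix (Fin n) (Fin n) ℝ)
      = B + e⁻¹ • vecMulVec rt rt - c⁻¹ • vecMulVec (B *ᵥ v) (B *ᵥ v) := by
    rw [hBplus, hvB]
    abel
  constructor
  · rw [hM, posSemidef_iff_dotProduct_mulVec]
    constructor
    · show _ᴴ = _
      rw [conjTranspose_eq_transpose_of_trivial]
      simp only [transpose_sub, transpose_add, transpose_smul, aux_transpose, hBsymm]
    · intro x
      have hxB : ∀ y z : Fin n → ℝ, y ⬝ᵥ B *ᵥ z = z ⬝ᵥ B *ᵥ y := by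
        intro y z
        rw [dotProduct_mulVec, dotProduct_comm, ← mulVec_transpose, hBsymm]
      set b := x ⬝ᵥ B *ᵥ v with hbdef
      have key : 0 ≤ x ⬝ᵥ B *ᵥ x - c⁻¹ * b ^ 2 := by
        have h0 := (posSemidef_iff_dotProduct_mulVec.mp hB.posSemidef).2 (x - (b / c) • v)
        simp only [star_trivial] at h0
        have hexp : (x - (b / c) • v) ⬝ᵥ B *ᵥ (x - (b / c) • v)
            = x ⬝ᵥ B *ᵥ x - 2 * (b / c) * b + (b / c) ^ 2 * c := by
          rw [mulVec_sub, mulVec_smul, sub_dotProduct, smul_dotProduct,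
            dotProduct_sub, dotProduct_sub, dotProduct_smul, dotProduct_smul,
            smul_eq_mul, smul_eq_mul, smul_eq_mul, hxB v x]
          ring
        rw [hexp] at h0
        have : 2 * (b / c) * b - (b / c) ^ 2 * c = c⁻¹ * b ^ 2 := by
          field_simp
          ring
        linarith [this]
      have hd : 0 ≤ e⁻¹ * (rt ⬝ᵥ x) ^ 2 :=
        mul_nonneg (inv_nonneg.mpr he.le) (sq_nonneg _)
      have hquad : x ⬝ᵥ (B + e⁻¹ • vecMulVec rt rt - c⁻¹ • vecMulVec (B *ᵥ v) (B *ᵥ v)) *ᵥ x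
          = x ⬝ᵥ B *ᵥ x + e⁻¹ * (rt ⬝ᵥ x) ^ 2 - c⁻¹ * b ^ 2 := by
        rw [sub_mulVec, add_mulVec, smul_mulVec, smul_mulVec,
          aux_mulVec, aux_mulVec, dotProduct_sub, dotProduct_add,
          dotProduct_smul, dotProduct_smul, smul_eq_mul, smul_eq_mul,
          dotProduct_smul, dotProduct_smul, smul_eq_mul, smul_eq_mul]
        have h1 : x ⬝ᵥ rt = rt ⬝ᵥ x := dotProduct_comm _ _
        have h2 : x ⬝ᵥ (B *ᵥ v) = b := rfl
        have h3 : (B *ᵥ v) ⬝ᵥ x = b := by rw [dotProduct_comm]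
        rw [h1, h2, h3]
        ring
      simp only [star_trivial]
      rw [hquad]
      linarith
  · have hrtv : rt ⬝ᵥ v = e := dotProduct_comm _ _
    have hvBv : (v ᵥ* B) ⬝ᵥ v = c := by rw [hvB]; exact dotProduct_comm _ _
    rw [hBplus, add_mulVec, sub_mulVec, add_mulVec, smul_mulVec, smul_mulVec,
      aux_mulVec, aux_mulVec, hrtv, hvBv, smul_mulVec, one_mulVec]
    have h1 : e⁻¹ • e • rt = rt := by
      rw [smul_smul, inv_mul_cancel₀ (ne_of_gt he), one_smul]
    have h2 : c⁻¹ • c • (B *ᵥ v) = B *ᵥ v := by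
      rw [smul_smul, inv_mul_cancel₀ (ne_of_gt hc), one_smul]
    rw [h1, h2, hrt]
    ext i
    simp
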